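/- Let M be an R-module such that Spec^s(M) is a finite set. Then Spec^s(M), with the second classical Zariski topology, is a spectral space; that is, it is a T0-space, it is quasi-compact, its quasi-compact open subsets are closed under finite intersections and form an open basis, and every irreducible closed subset has a generic point. -/
import Mathlib


open Pointwise

variable (R M : Type*) [CommRing R] [AddCommGroup M] [Module R M]

/-- A nonzero submodule `S` is *second* if for every `r : R`, `r • S = S` or `r • S = ⊥`. -/
def IsSecondSubmodule (S : Submodule R M) : Prop :=
  S ≠ ⊥ ∧ ∀ r : R, r • S = S ∨ r • S = ⊥

/-- The second spectrum of `M`: the collection of all second submodules of `M`. -/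
def SecondSpec : Type _ := {S : Submodule R M // IsSecondSubmodule R M S}

/-- `V^{s*}(N)`: the set of second submodules contained in `N`. -/
def Vs (N : Submodule R M) : Set (SecondSpec R M) := {S | S.1 ≤ N}

/-- `W^s(N)`: the complement of `V^{s*}(N)` in `Spec^s(M)`. -/
def Ws (N : Submodule R M) : Set (SecondSpec R M) := (Vs R M N)ᶜ

/-- The second classical Zariski topology on `Spec^s(M)`, generated by the
sub-basis `{W^s(N) : N ≤ M}`. -/
instance secondZariski : TopologicalSpace (SecondSpec R M) :=
  TopologicalSpace.generateFrom {U | ∃ N : Submodule R M, U = Ws R M N}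

/-- The second socle of a submodule `N`: the sum of all second submodules of `M`
contained in `N`. -/
def secSocle (N : Submodule R M) : Submodule R M :=
  sSup {S : Submodule R M | IsSecondSubmodule R M S ∧ S ≤ N}

lemma ws_isOpen (N : Submodule R M) : IsOpen (Ws R M N) :=
  TopologicalSpace.GenerateOpen.basic _ ⟨N, rfl⟩

lemma vs_isClosed (N : Submodule R M) : IsClosed (Vs R M N) :=
  isOpen_compl_iff.mp (ws_isOpen R M N)

lemma open_upclosed {U : Set (SecondSpec R M)} (hU : IsOpen U) :
    ∀ S T : SecondSpec R M, S.1 ≤ T.1 → S ∈ U → T ∈ U := by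
  have h : TopologicalSpace.GenerateOpen {U | ∃ N : Submodule R M, U = Ws R M N} U := hU
  clear hU
  induction h with
  | basic V hV =>
    obtain ⟨N, rfl⟩ := hV
    intro S T hle hS hT
    exact hS (hle.trans hT)
  | univ => intro S T _ _; trivial
  | inter V W hV hW ihV ihW =>
    intro S T hle hS
    exact ⟨ihV S T hle hS.1, ihW S T hle hS.2⟩
  | sUnion F hF ih =>
    intro S T hle hS
    obtain ⟨V, hV, hSV⟩ := hS
    exact ⟨V, hV, ih V hV S T hle hSV⟩

lemma closure_singleton_eq (y : SecondSpec R M) : closure {y} = Vs R M y.1 := by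
  apply Set.Subset.antisymm
  · refine closure_minimal ?_ (vs_isClosed R M y.1)
    intro x hx
    rw [Set.mem_singleton_iff] at hx
    subst hx
    exact show x.1 ≤ x.1 from le_rfl
  · intro S hS
    rw [mem_closure_iff]
    intro U hU hSU
    exact ⟨y, open_upclosed R M hU S y hS hSU, rfl⟩

/-- Thm 3.31: if `Spec^s(M)` is finite, then `Spec^s(M)` with the second classical
Zariski topology is a spectral space (Hochster's characterization): it is T0,
quasi-compact, its quasi-compact open subsets are closed under finite intersections and
form an open basis, and every irreducible closed subset has a generic point. -/
theorem stmt18 (hfin : Finite (SecondSpec R M)) :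
    T0Space (SecondSpec R M) ∧
      CompactSpace (SecondSpec R M) ∧
      (∀ U V : Set (SecondSpec R M),
        IsOpen U → IsCompact U → IsOpen V → IsCompact V → IsCompact (U ∩ V)) ∧
      TopologicalSpace.IsTopologicalBasis
        {U : Set (SecondSpec R M) | IsOpen U ∧ IsCompact U} ∧
      (∀ Y : Set (SecondSpec R M), IsIrreducible Y → IsClosed Y →
        ∃ y, Y = closure {y}) := by
  haveI := hfin
  have hcomp : ∀ s : Set (SecondSpec R M), IsCompact s := fun s => s.toFinite.isCompact
  refine ⟨?_, ?_, fun U V _ _ _ _ => hcomp _, ?_, ?_⟩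
  · rw [t0Space_iff_inseparable]
    intro x y hxy
    have h : closure {x} = closure {y} := by
      rw [← inseparable_iff_closure_eq]; exact hxy
    rw [closure_singleton_eq, closure_singleton_eq] at h
    have h1 : x ∈ Vs R M y.1 := h ▸ (show x.1 ≤ x.1 from le_rfl)
    have h2 : y ∈ Vs R M x.1 := h.symm ▸ (show y.1 ≤ y.1 from le_rfl)
    exact Subtype.ext (le_antisymm h1 h2)
  · infer_instance
  · apply TopologicalSpace.isTopologicalBasis_of_isOpen_of_nhds
    · exact fun U hU => hU.1
    · intro a U haU hU
      exact ⟨U, ⟨hU, hcomp U⟩, haU, le_refl _⟩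
  · intro Y hY hYc
    have hfinY : Y.Finite := Y.toFinite
    rw [isIrreducible_iff_sUnion_isClosed] at hY
    classical
    obtain ⟨z, hz, hYz⟩ := hY (hfinY.toFinset.image (fun y => closure {y}))
      (by intro z hz
          simp only [Finset.mem_image] at hz
          obtain ⟨y, _, rfl⟩ := hz
          exact isClosed_closure)
      (by intro x hx
          refine Set.mem_sUnion.mpr ⟨closure {x}, ?_, subset_closure rfl⟩
          simp only [Finset.coe_image, Set.mem_image, Finset.mem_coe,
            Set.Finite.mem_toFinset]
          exact ⟨x, hx, rfl⟩)
    simp only [Finset.mem_image, Set.Finite.mem_toFinset] at hz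
    obtain ⟨y, hyY, rfl⟩ := hz
    exact ⟨y, Set.Subset.antisymm hYz
      (closure_minimal (Set.singleton_subset_iff.mpr hyY) hYc)⟩
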